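/- The function v(x) = x_1^2/(2(1+x_n)) + (1/2)(x_2^2 + ... + x_{n-1}^2) + x_n^{2+α}/((1+α)(2+α)) + x_n^{3+α}/((2+α)(3+α)) on the upper half-space {x_n > 0} satisfies det D²v = x_n^α and v(x',0) = (1/2)|x'|^2. -/

import Mathlib

noncomputable def pderiv' {n : ℕ} (i : Fin n) (u : (Fin n → ℝ) → ℝ) (x : Fin n → ℝ) : ℝ :=
  fderiv ℝ u x (Pi.single i 1)

noncomputable def hess {n : ℕ} (u : (Fin n → ℝ) → ℝ) (x : Fin n → ℝ) :
    Matrix (Fin n) (Fin n) ℝ :=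
  Matrix.of fun i j => pderiv' j (pderiv' i u) x

noncomputable def Pj {n : ℕ} (i : Fin n) : (Fin n → ℝ) →L[ℝ] ℝ := ContinuousLinearMap.proj i

private lemma hasFDerivAt_comp_proj {n : ℕ} {φ : ℝ → ℝ} {φ' : ℝ} (i : Fin n) (x : Fin n → ℝ)
    (h : HasDerivAt φ φ' (x i)) :
    HasFDerivAt (fun y : Fin n → ℝ => φ (y i)) (φ' • Pj i) x := by
  have h2 : HasFDerivAt (fun y : Fin n → ℝ => y i) (Pj i) x := (Pj i).hasFDerivAt
  exact h.comp_hasFDerivAt x h2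



private lemma sum_helper {n : ℕ} (c : Fin n → Prop) [DecidablePred c] (f : Fin n → ℝ) (i : Fin n) :
    ∑ j : Fin n, (if c j then (if j = i then f j else 0) else 0) = if c i then f i else 0 := by
  classical
  have : ∀ j : Fin n, (if c j then (if j = i then f j else 0) else 0)
      = if j = i then (if c j then f j else 0) else 0 := by
    intro j
    by_cases h : j = i <;> by_cases h2 : c j <;> simp [h, h2]
  rw [Finset.sum_congr rfl (fun j _ => this j), Finset.sum_ite_eq' Finset.univ i]
  simp

private lemma grad_eq {n : ℕ} (hn : 2 ≤ n) {α : ℝ} (hα : 0 < α) (z m : Fin n)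
    (hz : (z : ℕ) = 0) (hm : (m : ℕ) = n - 1)
    (y : Fin n → ℝ) (hy : 0 < y m) (i : Fin n) :
    pderiv' i (fun x => (x z) ^ 2 / (2 * (1 + x m)) +
      (1 / 2) * ∑ j : Fin n, (if j.val ≠ 0 ∧ j.val ≠ n - 1 then (x j) ^ 2 else 0) +
      (x m) ^ ((2 : ℝ) + α) / ((1 + α) * (2 + α)) +
      (x m) ^ ((3 : ℝ) + α) / ((2 + α) * (3 + α))) y =
    if i = z then y z * (1 + y m)⁻¹
    else if i = m then -(y z ^ 2) * (2 * (1 + y m) ^ 2)⁻¹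
      + ((y m) ^ ((1:ℝ) + α) / (1 + α) + (y m) ^ ((2:ℝ) + α) / (2 + α))
    else y i := by
  have hzm : z ≠ m := by
    intro h; rw [Fin.ext_iff, hz, hm] at h; omega
  have hb : (0:ℝ) < 1 + y m := by linarith
  have hb' : (1 : ℝ) + y m ≠ 0 := hb.ne'
  have h2b : (2:ℝ) * (1 + y m) ≠ 0 := mul_ne_zero two_ne_zero hb'
  have h1 : HasFDerivAt (fun w : Fin n → ℝ => w z ^ 2) ((2 * y z) • Pj z) y :=
    hasFDerivAt_comp_proj z y (by simpa using hasDerivAt_pow 2 (y z))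
  have h2 : HasDerivAt (fun t : ℝ => (2 * (1 + t))⁻¹) (-2 / (2 * (1 + y m)) ^ 2) (y m) := by
    have h0 : HasDerivAt (fun t : ℝ => 2 * (1 + t)) 2 (y m) := by
      simpa using (((hasDerivAt_id (y m)).const_add 1).const_mul 2)
    exact h0.inv h2b
  have hT1 : HasFDerivAt (fun w : Fin n → ℝ => w z ^ 2 / (2 * (1 + w m)))
      ((y z ^ 2) • ((-2 / (2 * (1 + y m)) ^ 2) • Pj m)
        + (2 * (1 + y m))⁻¹ • ((2 * y z) • Pj z)) y := by
    simp only [div_eq_mul_inv]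
    exact h1.mul (hasFDerivAt_comp_proj m y h2)
  have hS : HasFDerivAt (fun w : Fin n → ℝ =>
        ∑ j : Fin n, (if j.val ≠ 0 ∧ j.val ≠ n - 1 then w j ^ 2 else 0))
      (∑ j : Fin n, if j.val ≠ 0 ∧ j.val ≠ n - 1 then (2 * y j) • Pj j else 0) y := by
    apply HasFDerivAt.fun_sum
    intro j _
    by_cases hj : j.val ≠ 0 ∧ j.val ≠ n - 1
    · simp only [if_pos hj]
      exact hasFDerivAt_comp_proj j y (by simpa using hasDerivAt_pow 2 (y j))
    · simp only [if_neg hj]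
      exact hasFDerivAt_const 0 y
  have hT2 := hS.const_mul (1/2 : ℝ)
  have hφ3 : HasDerivAt (fun t : ℝ => t ^ ((2:ℝ)+α) / ((1+α)*(2+α)))
      ((((2:ℝ)+α) * y m ^ ((2:ℝ)+α-1)) / ((1+α)*(2+α))) (y m) :=
    (Real.hasDerivAt_rpow_const (Or.inl hy.ne')).div_const _
  have hφ4 : HasDerivAt (fun t : ℝ => t ^ ((3:ℝ)+α) / ((2+α)*(3+α)))
      ((((3:ℝ)+α) * y m ^ ((3:ℝ)+α-1)) / ((2+α)*(3+α))) (y m) :=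
    (Real.hasDerivAt_rpow_const (Or.inl hy.ne')).div_const _
  have hT3 := hasFDerivAt_comp_proj m y hφ3
  have hT4 := hasFDerivAt_comp_proj m y hφ4
  have HV := ((hT1.add hT2).add hT3).add hT4
  have hval : pderiv' i (fun x => (x z) ^ 2 / (2 * (1 + x m)) +
      (1 / 2) * ∑ j : Fin n, (if j.val ≠ 0 ∧ j.val ≠ n - 1 then (x j) ^ 2 else 0) +
      (x m) ^ ((2 : ℝ) + α) / ((1 + α) * (2 + α)) +
      (x m) ^ ((3 : ℝ) + α) / ((2 + α) * (3 + α))) y =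
      (((y z ^ 2) • ((-2 / (2 * (1 + y m)) ^ 2) • Pj m)
        + (2 * (1 + y m))⁻¹ • ((2 * y z) • Pj z)
        + (1/2 : ℝ) • (∑ j : Fin n, if j.val ≠ 0 ∧ j.val ≠ n - 1 then (2 * y j) • Pj j else 0))
        + (((2:ℝ)+α) * y m ^ ((2:ℝ)+α-1) / ((1+α)*(2+α))) • Pj m
        + (((3:ℝ)+α) * y m ^ ((3:ℝ)+α-1) / ((2+α)*(3+α))) • Pj m) (Pi.single i 1) := by
    show fderiv ℝ _ y (Pi.single i 1) = _
    rw [HasFDerivAt.fderiv (by exact HV)]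
  rw [hval]
  simp only [ContinuousLinearMap.add_apply, ContinuousLinearMap.smul_apply,
    ContinuousLinearMap.sum_apply, ContinuousLinearMap.zero_apply, smul_eq_mul,
    apply_ite (fun L : (Fin n → ℝ) →L[ℝ] ℝ => L (Pi.single i 1)),
    Pj, ContinuousLinearMap.proj_apply, Pi.single_apply, mul_ite, mul_one, mul_zero,
    sum_helper]
  have ha1 : (1:ℝ) + α ≠ 0 := by linarith
  have ha2 : (2:ℝ) + α ≠ 0 := by linarith
  have ha3 : (3:ℝ) + α ≠ 0 := by linarith
  rw [show (2:ℝ)+α-1 = 1+α by ring, show (3:ℝ)+α-1 = 2+α by ring]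
  rcases eq_or_ne i z with rfl | hiz
  · have hmz : (m = i) = False := by
      simp only [eq_iff_iff, iff_false]; exact fun h => hzm h.symm
    simp only [if_pos rfl, hmz, if_false, if_true, hz]
    simp only [ne_eq, not_true_eq_false, false_and, if_false]
    field_simp
    ring
  · rcases eq_or_ne i m with rfl | him
    · have hzi : (z = i) = False := by simp only [eq_iff_iff, iff_false]; exact hzm
      have hii : (i = z) = False := by
        simp only [eq_iff_iff, iff_false]; exact fun h => hzm h.symm
      simp only [if_pos rfl, hzi, hii, if_false, if_true, hm]
      simp only [ne_eq, not_true_eq_false, and_false, if_false]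
      field_simp
      ring
    · have h1 : (z = i) = False := by
        simp only [eq_iff_iff, iff_false]; exact fun h => hiz h.symm
      have h2 : (m = i) = False := by
        simp only [eq_iff_iff, iff_false]; exact fun h => him h.symm
      have hc : ((i:ℕ) ≠ 0 ∧ (i:ℕ) ≠ n - 1) := by
        constructor
        · intro h; exact hiz (Fin.ext (by rw [h, hz]))
        · intro h; exact him (Fin.ext (by rw [h, hm]))
      simp only [h1, h2, if_false, if_neg hiz, if_neg him, if_pos hc]
      ring

private lemma pderiv_congr {n : ℕ} {u g : (Fin n → ℝ) → ℝ} {x : Fin n → ℝ}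
    (h : u =ᶠ[nhds x] g) (j : Fin n) : pderiv' j u x = pderiv' j g x := by
  unfold pderiv'; rw [h.fderiv_eq]

private lemma pderiv_of_hasFDerivAt {n : ℕ} {u : (Fin n → ℝ) → ℝ}
    {D : (Fin n → ℝ) →L[ℝ] ℝ} {x : Fin n → ℝ}
    (h : HasFDerivAt u D x) (j : Fin n) : pderiv' j u x = D (Pi.single j 1) := by
  unfold pderiv'; rw [h.fderiv]

private lemma hess_entry {n : ℕ} (hn : 2 ≤ n) {α : ℝ} (hα : 0 < α) (z m : Fin n)
    (hz : (z : ℕ) = 0) (hm : (m : ℕ) = n - 1)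
    (x : Fin n → ℝ) (hx : 0 < x m) (i j : Fin n) :
    pderiv' j (pderiv' i (fun x => (x z) ^ 2 / (2 * (1 + x m)) +
      (1 / 2) * ∑ j : Fin n, (if j.val ≠ 0 ∧ j.val ≠ n - 1 then (x j) ^ 2 else 0) +
      (x m) ^ ((2 : ℝ) + α) / ((1 + α) * (2 + α)) +
      (x m) ^ ((3 : ℝ) + α) / ((2 + α) * (3 + α)))) x =
    if i = z then (if j = z then (1 + x m)⁻¹ else if j = m then -(x z / (1 + x m) ^ 2) else 0)
    else if i = m then (if j = z then -(x z / (1 + x m) ^ 2)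
      else if j = m then (x z) ^ 2 / (1 + x m) ^ 3 + (x m) ^ α + (x m) ^ ((1:ℝ) + α) else 0)
    else if j = i then 1 else 0 := by
  have hzm : z ≠ m := by
    intro h; rw [Fin.ext_iff, hz, hm] at h; omega
  have hb : (0:ℝ) < 1 + x m := by linarith
  have hb' : (1 : ℝ) + x m ≠ 0 := hb.ne'
  have ha1 : (1:ℝ) + α ≠ 0 := by linarith
  have ha2 : (2:ℝ) + α ≠ 0 := by linarith
  have hmem : {y : Fin n → ℝ | 0 < y m} ∈ nhds x :=
    (isOpen_lt continuous_const (continuous_apply m)).mem_nhds hx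
  rcases eq_or_ne i z with rfl | hiz
  · -- row z
    have hev : pderiv' i (fun x => (x i) ^ 2 / (2 * (1 + x m)) +
        (1 / 2) * ∑ j : Fin n, (if j.val ≠ 0 ∧ j.val ≠ n - 1 then (x j) ^ 2 else 0) +
        (x m) ^ ((2 : ℝ) + α) / ((1 + α) * (2 + α)) +
        (x m) ^ ((3 : ℝ) + α) / ((2 + α) * (3 + α)))
        =ᶠ[nhds x] (fun y => y i * (1 + y m)⁻¹) := by
      filter_upwards [hmem] with y hy
      rw [grad_eq hn hα i m hz hm y hy i, if_pos rfl]
    have hd : HasDerivAt (fun t:ℝ => (1+t)⁻¹) (-1 / (1 + x m)^2) (x m) := by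
      have h0 : HasDerivAt (fun t : ℝ => 1+t) 1 (x m) := by
        simpa using (hasDerivAt_id (x m)).const_add 1
      exact h0.inv hb'
    have HD : HasFDerivAt (fun y : Fin n → ℝ => y i * (1 + y m)⁻¹)
        ((x i) • ((-1 / (1 + x m)^2) • Pj m) + (1 + x m)⁻¹ • Pj i) x :=
      (Pj i).hasFDerivAt.mul (hasFDerivAt_comp_proj (φ := fun t => (1+t)⁻¹) m x hd)
    rw [pderiv_congr hev j, pderiv_of_hasFDerivAt HD j]
    simp only [ContinuousLinearMap.add_apply, ContinuousLinearMap.smul_apply,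
      Pj, ContinuousLinearMap.proj_apply, Pi.single_apply, smul_eq_mul, if_pos rfl]
    rcases eq_or_ne j i with rfl | hji
    · have h2 : (m = j) = False := by
        simp only [eq_iff_iff, iff_false]; exact fun h => hzm h.symm
      simp [h2]
    · have h1 : (i = j) = False := by
        simp only [eq_iff_iff, iff_false]; exact fun h => hji h.symm
      rcases eq_or_ne j m with rfl | hjm
      · simp only [if_pos rfl, h1, if_false, if_true, if_neg (fun h : j = i => hji h)]
        field_simp
        ring
      · have h2 : (m = j) = False := by
          simp only [eq_iff_iff, iff_false]; exact fun h => hjm h.symm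
        simp [h1, h2, hji, hjm]
  · rcases eq_or_ne i m with rfl | him
    · -- row m
      have hev : pderiv' i (fun x => (x z) ^ 2 / (2 * (1 + x i)) +
          (1 / 2) * ∑ j : Fin n, (if j.val ≠ 0 ∧ j.val ≠ n - 1 then (x j) ^ 2 else 0) +
          (x i) ^ ((2 : ℝ) + α) / ((1 + α) * (2 + α)) +
          (x i) ^ ((3 : ℝ) + α) / ((2 + α) * (3 + α)))
          =ᶠ[nhds x] (fun y => -(y z ^ 2) * (2 * (1 + y i) ^ 2)⁻¹
            + ((y i) ^ ((1:ℝ) + α) / (1 + α) + (y i) ^ ((2:ℝ) + α) / (2 + α))) := by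
        filter_upwards [hmem] with y hy
        rw [grad_eq hn hα z i hz hm y hy i, if_neg (fun h => hzm h.symm), if_pos rfl]
      have hc : HasFDerivAt (fun y : Fin n → ℝ => -(y z ^ 2)) ((-(2 * x z)) • Pj z) x := by
        apply hasFDerivAt_comp_proj (φ := fun t => -(t^2)) z x
        have h := (hasDerivAt_pow 2 (x z)).neg
        norm_num at h
        exact h
      have hd : HasFDerivAt (fun y : Fin n → ℝ => (2 * (1 + y i) ^ 2)⁻¹)
          ((-(4*(1 + x i)) / (2*(1 + x i)^2)^2) • Pj i) x := by
        apply hasFDerivAt_comp_proj (φ := fun t => (2*(1+t)^2)⁻¹) i x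
        have h0 : HasDerivAt (fun t : ℝ => 2*(1+t)^2) (4*(1 + x i)) (x i) := by
          have h := (((hasDerivAt_id (x i)).const_add 1).pow 2).const_mul 2
          simp only [id_eq] at h
          have e : (2:ℝ) * ((2:ℕ) * (1 + x i)^(2-1) * 1) = 4*(1 + x i) := by push_cast; ring
          rw [e] at h; exact h
        exact h0.inv (by positivity)
      have he : HasFDerivAt (fun y : Fin n → ℝ => (y i) ^ ((1:ℝ) + α) / (1 + α))
          ((((1:ℝ)+α) * (x i) ^ ((1:ℝ)+α-1) / (1+α)) • Pj i) x :=
        hasFDerivAt_comp_proj i x ((Real.hasDerivAt_rpow_const (Or.inl hx.ne')).div_const _)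
      have hf : HasFDerivAt (fun y : Fin n → ℝ => (y i) ^ ((2:ℝ) + α) / (2 + α))
          ((((2:ℝ)+α) * (x i) ^ ((2:ℝ)+α-1) / (2+α)) • Pj i) x :=
        hasFDerivAt_comp_proj i x ((Real.hasDerivAt_rpow_const (Or.inl hx.ne')).div_const _)
      have HD : HasFDerivAt (fun y : Fin n → ℝ => -(y z ^ 2) * (2 * (1 + y i) ^ 2)⁻¹
            + ((y i) ^ ((1:ℝ) + α) / (1 + α) + (y i) ^ ((2:ℝ) + α) / (2 + α)))
          ((-(x z ^ 2)) • ((-(4*(1 + x i)) / (2*(1 + x i)^2)^2) • Pj i)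
            + (2*(1 + x i)^2)⁻¹ • ((-(2 * x z)) • Pj z)
            + ((((1:ℝ)+α) * (x i) ^ ((1:ℝ)+α-1) / (1+α)) • Pj i
              + (((2:ℝ)+α) * (x i) ^ ((2:ℝ)+α-1) / (2+α)) • Pj i)) x :=
        (hc.mul hd).add (he.add hf)
      rw [pderiv_congr hev j, pderiv_of_hasFDerivAt HD j]
      simp only [ContinuousLinearMap.add_apply, ContinuousLinearMap.smul_apply,
        Pj, ContinuousLinearMap.proj_apply, Pi.single_apply, smul_eq_mul,
        if_neg (fun h : i = z => hzm h.symm), if_pos rfl]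
      rw [show (1:ℝ)+α-1 = α by ring, show (2:ℝ)+α-1 = 1+α by ring]
      rcases eq_or_ne j z with rfl | hjz
      · have h1 : (i = j) = False := by
          simp only [eq_iff_iff, iff_false]; exact fun h => hzm h.symm
        simp only [if_pos rfl, h1, if_false, if_true, if_neg (fun h : j = i => hzm h)]
        field_simp
        ring
      · have h1 : (z = j) = False := by
          simp only [eq_iff_iff, iff_false]; exact fun h => hjz h.symm
        rcases eq_or_ne j i with rfl | hji
        · simp only [if_pos rfl, h1, if_false, if_true, if_neg hjz]
          field_simp
          ring
        · have h2 : (i = j) = False := by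
            simp only [eq_iff_iff, iff_false]; exact fun h => hji h.symm
          simp [h1, h2, hjz, hji]
    · -- other rows
      have hev : pderiv' i (fun x => (x z) ^ 2 / (2 * (1 + x m)) +
          (1 / 2) * ∑ j : Fin n, (if j.val ≠ 0 ∧ j.val ≠ n - 1 then (x j) ^ 2 else 0) +
          (x m) ^ ((2 : ℝ) + α) / ((1 + α) * (2 + α)) +
          (x m) ^ ((3 : ℝ) + α) / ((2 + α) * (3 + α)))
          =ᶠ[nhds x] (fun y => y i) := by
        filter_upwards [hmem] with y hy
        rw [grad_eq hn hα z m hz hm y hy i, if_neg hiz, if_neg him]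
      have HD : HasFDerivAt (fun y : Fin n → ℝ => y i) (Pj i) x := (Pj i).hasFDerivAt
      rw [pderiv_congr hev j, pderiv_of_hasFDerivAt HD j]
      simp only [Pj, ContinuousLinearMap.proj_apply, Pi.single_apply,
        if_neg hiz, if_neg him]
      simp [eq_comm]

private lemma det_aux {n : ℕ} (z m : Fin n) (hzm : z < m) (p q r : ℝ) (hp : p ≠ 0) :
    (Matrix.of fun i j : Fin n =>
      if i = z then (if j = z then p else if j = m then q else 0)
      else if i = m then (if j = z then q else if j = m then r else 0)
      else if j = i then 1 else 0).det = p * r - q * q := by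
  classical
  set f : Fin n → Fin n → ℝ := fun i j =>
      if i = z then (if j = z then p else if j = m then q else 0)
      else if i = m then (if j = z then q else if j = m then r else 0)
      else if j = i then 1 else 0 with hf
  set M : Matrix (Fin n) (Fin n) ℝ := Matrix.of f with hM
  have hmz : m ≠ z := hzm.ne'
  have key := Matrix.det_updateRow_add_smul_self M hmz (-q/p)
  set M' : Matrix (Fin n) (Fin n) ℝ := M.updateRow m (M m + (-q/p) • M z) with hM'
  have happ : ∀ i j, M i j = f i j := fun i j => rfl
  have ht : M'.BlockTriangular id := by
    intro i j hij
    simp only [id] at hij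
    by_cases him : i = m
    · subst him
      rw [hM', Matrix.updateRow_self]
      simp only [Pi.add_apply, Pi.smul_apply, smul_eq_mul, happ]
      have hjm : j ≠ i := hij.ne
      by_cases hjz : j = z
      · subst hjz
        simp only [hf, if_neg hmz, if_pos rfl, if_true, if_neg (fun h : j = i => hjm h)]
        field_simp
        ring
      · have hjz' : ¬ (j = z) := hjz
        simp [hf, hmz, hjz', hjm]
    · rw [hM', Matrix.updateRow_ne him, happ]
      by_cases hiz : i = z
      · subst hiz
        have hjz : j ≠ i := hij.ne
        have hjm : j ≠ m := by rintro rfl; exact absurd hij (not_lt.mpr hzm.le)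
        simp [hf, hjz, hjm]
      · simp [hf, hiz, him, hij.ne]
  have hdet2 : M'.det = ∏ i, M' i i := Matrix.det_of_upperTriangular ht
  have hMzz : M' z z = p := by
    rw [hM', Matrix.updateRow_ne (fun h : z = m => hzm.ne h), happ]
    simp [hf]
  have hMmm : M' m m = r + (-q/p) * q := by
    rw [hM', Matrix.updateRow_self]
    simp only [Pi.add_apply, Pi.smul_apply, smul_eq_mul, happ]
    simp [hf, hmz]
  have hone : ∀ i, i ≠ z → i ≠ m → M' i i = 1 := by
    intro i hiz him
    rw [hM', Matrix.updateRow_ne him, happ]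
    simp [hf, hiz, him]
  have hprod : ∏ i, M' i i = M' z z * M' m m := by
    rw [← Finset.prod_subset (Finset.subset_univ ({z, m} : Finset (Fin n)))
      (fun i _ hi => by
        simp only [Finset.mem_insert, Finset.mem_singleton, not_or] at hi
        exact hone i hi.1 hi.2)]
    rw [Finset.prod_pair hzm.ne]
  have : M.det = M'.det := key.symm
  rw [this, hdet2, hprod, hMzz, hMmm]
  field_simp
  ring


private lemma boundary_eq {n : ℕ} (hn : 2 ≤ n) {α : ℝ} (hα : 0 < α) (z m : Fin n)
    (hz : (z : ℕ) = 0) (hm : (m : ℕ) = n - 1) (x : Fin n → ℝ) (hx : x m = 0) :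
    (x z) ^ 2 / (2 * (1 + x m)) +
      (1 / 2) * (∑ j : Fin n, (if j.val ≠ 0 ∧ j.val ≠ n - 1 then (x j) ^ 2 else 0)) +
      (x m) ^ ((2 : ℝ) + α) / ((1 + α) * (2 + α)) +
      (x m) ^ ((3 : ℝ) + α) / ((2 + α) * (3 + α)) =
    (1 / 2) * ∑ i : Fin n, (if i.val ≠ n - 1 then (x i) ^ 2 else 0) := by
  have ha2 : (2:ℝ) + α ≠ 0 := by linarith
  have ha3 : (3:ℝ) + α ≠ 0 := by linarith
  rw [hx, Real.zero_rpow ha2, Real.zero_rpow ha3]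
  have hsplit : ∀ i : Fin n, (if (i:ℕ) ≠ n - 1 then x i ^ 2 else 0)
      = (if i = z then x i ^ 2 else 0)
        + (if (i:ℕ) ≠ 0 ∧ (i:ℕ) ≠ n - 1 then x i ^ 2 else 0) := by
    intro i
    by_cases h1 : i = z
    · subst h1
      have h0 : (0:ℕ) ≠ n - 1 := by omega
      simp [hz, h0]
    · have hi0 : (i:ℕ) ≠ 0 := fun h => h1 (Fin.ext (h.trans hz.symm))
      simp [h1, hi0]
  rw [Finset.sum_congr rfl (fun i _ => hsplit i), Finset.sum_add_distrib,
    Finset.sum_ite_eq' Finset.univ z (fun i => x i ^ 2)]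
  simp only [Finset.mem_univ, if_true]
  field_simp
  ring



/-- the function
`v(x) = x₁²/(2(1+xₙ)) + ½(x₂²+⋯+x_{n-1}²) + xₙ^{2+α}/((1+α)(2+α)) + xₙ^{3+α}/((2+α)(3+α))`
on the upper half-space `{xₙ > 0}` satisfies `det D²v = xₙ^α` and `v(x',0) = ½|x'|²`. -/
theorem stmt1 (n : ℕ) (hn : 2 ≤ n) (α : ℝ) (hα : 0 < α)
    (v : (Fin n → ℝ) → ℝ)
    (hv : v = fun x =>
      (x ⟨0, by omega⟩) ^ 2 / (2 * (1 + x ⟨n - 1, by omega⟩)) +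
      (1 / 2) * ∑ i : Fin n, (if i.val ≠ 0 ∧ i.val ≠ n - 1 then (x i) ^ 2 else 0) +
      (x ⟨n - 1, by omega⟩) ^ ((2 : ℝ) + α) / ((1 + α) * (2 + α)) +
      (x ⟨n - 1, by omega⟩) ^ ((3 : ℝ) + α) / ((2 + α) * (3 + α))) :
    (∀ x : Fin n → ℝ, 0 < x ⟨n - 1, by omega⟩ →
      (hess v x).det = (x ⟨n - 1, by omega⟩) ^ α) ∧
    (∀ x : Fin n → ℝ, x ⟨n - 1, by omega⟩ = 0 →
      v x = (1 / 2) * ∑ i : Fin n, (if i.val ≠ n - 1 then (x i) ^ 2 else 0)) := by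
  subst hv
  have hz1 : (0:ℕ) < n := by omega
  have hm1 : n - 1 < n := by omega
  set z : Fin n := ⟨0, hz1⟩ with hzdef
  set m : Fin n := ⟨n - 1, hm1⟩ with hmdef
  have hz : (z : ℕ) = 0 := rfl
  have hm : (m : ℕ) = n - 1 := rfl
  have hzm : z < m := by
    rw [Fin.lt_def]; show 0 < n - 1; omega
  constructor
  · intro x hx
    have hx' : 0 < x m := hx
    have hb : (0:ℝ) < 1 + x m := by linarith
    have hb' : (1:ℝ) + x m ≠ 0 := hb.ne'
    have hp : (1 + x m)⁻¹ ≠ 0 := inv_ne_zero hb'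
    have hentry : hess (fun x : Fin n → ℝ =>
        (x z) ^ 2 / (2 * (1 + x m)) +
        (1 / 2) * ∑ j : Fin n, (if j.val ≠ 0 ∧ j.val ≠ n - 1 then (x j) ^ 2 else 0) +
        (x m) ^ ((2 : ℝ) + α) / ((1 + α) * (2 + α)) +
        (x m) ^ ((3 : ℝ) + α) / ((2 + α) * (3 + α))) x =
        Matrix.of (fun i j : Fin n =>
          if i = z then (if j = z then (1 + x m)⁻¹ else if j = m then -(x z / (1 + x m) ^ 2) else 0)
          else if i = m then (if j = z then -(x z / (1 + x m) ^ 2)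
            else if j = m then (x z) ^ 2 / (1 + x m) ^ 3 + (x m) ^ α + (x m) ^ ((1:ℝ) + α) else 0)
          else if j = i then 1 else 0) := by
      funext i j
      exact hess_entry hn hα z m hz hm x hx' i j
    show (hess (fun x : Fin n → ℝ =>
        (x z) ^ 2 / (2 * (1 + x m)) +
        (1 / 2) * ∑ j : Fin n, (if j.val ≠ 0 ∧ j.val ≠ n - 1 then (x j) ^ 2 else 0) +
        (x m) ^ ((2 : ℝ) + α) / ((1 + α) * (2 + α)) +
        (x m) ^ ((3 : ℝ) + α) / ((2 + α) * (3 + α))) x).det = (x m) ^ α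
    rw [hentry, det_aux z m hzm ((1 + x m)⁻¹) (-(x z / (1 + x m) ^ 2))
      ((x z) ^ 2 / (1 + x m) ^ 3 + (x m) ^ α + (x m) ^ ((1:ℝ) + α)) hp]
    rw [show (x m) ^ ((1:ℝ) + α) = x m * (x m) ^ α by
      rw [Real.rpow_add hx', Real.rpow_one]]
    field_simp
    ring
  · intro x hx
    have hx' : x m = 0 := hx
    exact boundary_eq hn hα z m hz hm x hx'
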